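/- Let m ≥ 2 be an integer. For A ∈ Matrix (Fin m) (Fin m) ℂ let S(A) = {(X,Y) ∈ 𝔰𝔲(m) × 𝔰𝔲(m) : X·A = A·Y} and T(A) = {X·A − A·Y : X, Y ∈ 𝔰𝔲(m)}, regarded as real vector spaces. Then the minimum over all A of dim_ℝ S(A) equals m−1, and the maximum over all A of dim_ℝ T(A) equals 2m² − (m+1). Equivalently, the action of SU(m)×SU(m) on ℂᵐ ⊗_ℂ ℂᵐ (realized as m×m complex matrices with (g,h)·A = g A h*) has cohomogeneity m+1; in particular, for m = 5, 6, 7 this representation has cohomogeneity 6, 7, 8 respectively. -/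

import Mathlib

open Matrix

/-- `S(A) = {(X,Y) ∈ 𝔰𝔲(m) × 𝔰𝔲(m) : X·A = A·Y}` (traceless skew-Hermitian matrices). -/
def stabSet17 {m : ℕ} (A : Matrix (Fin m) (Fin m) ℂ) :
    Set (Matrix (Fin m) (Fin m) ℂ × Matrix (Fin m) (Fin m) ℂ) :=
  {p | p.1ᴴ = -p.1 ∧ p.1.trace = 0 ∧ p.2ᴴ = -p.2 ∧ p.2.trace = 0 ∧ p.1 * A = A * p.2}

/-- `T(A) = {X·A − A·Y : X, Y ∈ 𝔰𝔲(m)}`. -/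
def tangSet17 {m : ℕ} (A : Matrix (Fin m) (Fin m) ℂ) :
    Set (Matrix (Fin m) (Fin m) ℂ) :=
  {B | ∃ X Y : Matrix (Fin m) (Fin m) ℂ,
    Xᴴ = -X ∧ X.trace = 0 ∧ Yᴴ = -Y ∧ Y.trace = 0 ∧ B = X * A - A * Y}

set_option maxHeartbeats 2000000

open Module

abbrev Mat (m : ℕ) := Matrix (Fin m) (Fin m) ℂ

variable {m : ℕ}

noncomputable def sk (m : ℕ) : Submodule ℝ (Mat m) where
  carrier := {X | Xᴴ = -X}
  add_mem' := by
    intro a b ha hb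
    simp only [Set.mem_setOf_eq] at *
    rw [conjTranspose_add, ha, hb, neg_add]
  zero_mem' := by simp
  smul_mem' := by
    intro r X hX
    simp only [Set.mem_setOf_eq] at *
    rw [conjTranspose_smul, hX]
    simp

noncomputable def herm (m : ℕ) : Submodule ℝ (Mat m) where
  carrier := {X | Xᴴ = X}
  add_mem' := by
    intro a b ha hb
    simp only [Set.mem_setOf_eq] at *
    rw [conjTranspose_add, ha, hb]
  zero_mem' := by simp
  smul_mem' := by
    intro r X hX
    simp only [Set.mem_setOf_eq] at *
    rw [conjTranspose_smul, hX]
    simp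

noncomputable def trR (m : ℕ) : Mat m →ₗ[ℝ] ℂ :=
  (Matrix.traceLinearMap (Fin m) ℂ ℂ).restrictScalars ℝ

noncomputable def su (m : ℕ) : Submodule ℝ (Mat m) := sk m ⊓ LinearMap.ker (trR m)

noncomputable def phi (A : Mat m) : (Mat m × Mat m) →ₗ[ℝ] Mat m where
  toFun p := p.1 * A - A * p.2
  map_add' p q := by
    simp only [Prod.fst_add, Prod.snd_add, add_mul, mul_add]
    abel
  map_smul' r p := by
    simp only [Prod.smul_fst, Prod.smul_snd, RingHom.id_apply, smul_sub,
      Matrix.smul_mul, Matrix.mul_smul]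

noncomputable def PP (m : ℕ) : Submodule ℝ (Mat m × Mat m) := (su m).prod (su m)


noncomputable def skEquivHerm (m : ℕ) : sk m ≃ₗ[ℝ] herm m where
  toFun X := ⟨Complex.I • (X : Mat m), by
    have hX := X.2
    simp only [sk, Submodule.mem_mk, AddSubmonoid.mem_mk, AddSubsemigroup.mem_mk,
      Set.mem_setOf_eq] at hX
    show (Complex.I • (X:Mat m))ᴴ = Complex.I • (X:Mat m)
    rw [conjTranspose_smul, hX, Complex.star_def, Complex.conj_I, neg_smul, smul_neg, neg_neg]⟩
  invFun X := ⟨(-Complex.I) • (X : Mat m), by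
    have hX := X.2
    simp only [herm, Submodule.mem_mk, AddSubmonoid.mem_mk, AddSubsemigroup.mem_mk,
      Set.mem_setOf_eq] at hX
    show ((-Complex.I) • (X:Mat m))ᴴ = -((-Complex.I) • (X:Mat m))
    rw [conjTranspose_smul, hX]
    simp⟩
  map_add' X Y := by ext1; simp
  map_smul' r X := by
    ext1
    simp only [SetLike.val_smul, RingHom.id_apply]
    exact (smul_comm _ _ _)
  left_inv X := by ext1; simp [smul_smul]
  right_inv X := by ext1; simp [smul_smul]

lemma sk_sup_herm : sk m ⊔ herm m = ⊤ := by
  rw [Submodule.eq_top_iff']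
  intro X
  have h1 : (2⁻¹ : ℝ) • (X - Xᴴ) ∈ sk m := by
    show ((2⁻¹ : ℝ) • (X - Xᴴ))ᴴ = -((2⁻¹ : ℝ) • (X - Xᴴ))
    rw [conjTranspose_smul, conjTranspose_sub, conjTranspose_conjTranspose]
    simp [smul_sub]
  have h2 : (2⁻¹ : ℝ) • (X + Xᴴ) ∈ herm m := by
    show ((2⁻¹ : ℝ) • (X + Xᴴ))ᴴ = (2⁻¹ : ℝ) • (X + Xᴴ)
    rw [conjTranspose_smul, conjTranspose_add, conjTranspose_conjTranspose]
    simp [add_comm]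
  have : X = (2⁻¹ : ℝ) • (X - Xᴴ) + (2⁻¹ : ℝ) • (X + Xᴴ) := by
    rw [← smul_add]
    have : X - Xᴴ + (X + Xᴴ) = (2 : ℝ) • X := by
      rw [two_smul]; abel
    rw [this, smul_smul]
    norm_num
  rw [this]
  exact Submodule.add_mem_sup h1 h2

lemma sk_inf_herm : sk m ⊓ herm m = ⊥ := by
  rw [Submodule.eq_bot_iff]
  rintro X ⟨h1, h2⟩
  have h1 : Xᴴ = -X := h1
  have h2 : Xᴴ = X := h2
  have hx : X + X = 0 := by
    nth_rewrite 1 [← h2]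
    rw [h1]; abel
  funext i j
  have := congrFun (congrFun hx i) j
  change X i j + X i j = 0 at this
  have : (2:ℂ) * X i j = 0 := by ring_nf; linear_combination this
  simpa using this

lemma finrank_sk (m : ℕ) : finrank ℝ (sk m) = m * m := by
  have h := Submodule.finrank_sup_add_finrank_inf_eq (sk m) (herm m)
  rw [sk_sup_herm, sk_inf_herm] at h
  have he : finrank ℝ (herm m) = finrank ℝ (sk m) := (skEquivHerm m).symm.finrank_eq
  have htop : finrank ℝ (⊤ : Submodule ℝ (Mat m)) = m * m * 2 := by
    rw [finrank_top]
    rw [Module.finrank_matrix]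
    simp [Complex.finrank_real_complex]
  rw [htop, he] at h
  simp only [finrank_bot, add_zero] at h
  omega

noncomputable def imtr (m : ℕ) : Mat m →ₗ[ℝ] ℝ := Complex.imLm.comp (trR m)

lemma mem_sk {X : Mat m} : X ∈ sk m ↔ Xᴴ = -X := Iff.rfl

lemma retr_eq_zero {X : Mat m} (hX : X ∈ sk m) : (X.trace).re = 0 := by
  have h : Xᴴ.trace = -X.trace := by rw [mem_sk.mp hX, trace_neg]
  rw [trace_conjTranspose] at h
  have := congrArg Complex.re h
  simp only [Complex.star_def, Complex.conj_re, Complex.neg_re] at this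
  linarith

lemma su_eq_map : su m = Submodule.map (sk m).subtype
    (LinearMap.ker ((imtr m).domRestrict (sk m))) := by
  ext X
  simp only [su, Submodule.mem_inf, LinearMap.mem_ker, Submodule.mem_map,
    LinearMap.mem_ker, LinearMap.domRestrict_apply, Submodule.coe_subtype]
  constructor
  · rintro ⟨h1, h2⟩
    refine ⟨⟨X, h1⟩, ?_, rfl⟩
    simp [imtr, trR]
    show (X.trace).im = 0
    have h3 : X.trace = 0 := h2
    rw [h3]
    simp
  · rintro ⟨⟨Y, hY⟩, h2, rfl⟩
    refine ⟨hY, ?_⟩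
    have hre := retr_eq_zero hY
    have him : (Y.trace).im = 0 := h2
    show Y.trace = 0
    exact Complex.ext hre him

lemma finrank_su (m : ℕ) (hm : 1 ≤ m) : finrank ℝ (su m) = m * m - 1 := by
  have hrn := LinearMap.finrank_range_add_finrank_ker ((imtr m).domRestrict (sk m))
  have hsurj : LinearMap.range ((imtr m).domRestrict (sk m)) = ⊤ := by
    rw [LinearMap.range_eq_top]
    intro r
    refine ⟨⟨(r / m) • (Complex.I • (1 : Mat m)), ?_⟩, ?_⟩
    · rw [mem_sk]
      rw [conjTranspose_smul, conjTranspose_smul, conjTranspose_one]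
      simp [Complex.star_def, Complex.conj_I]
    · show (((r / m) • (Complex.I • (1 : Mat m))).trace).im = r
      rw [trace_smul, trace_smul, trace_one]
      have hmne : (m : ℝ) ≠ 0 := by positivity
      simp only [Finset.card_univ, Fintype.card_fin, smul_eq_mul, Complex.smul_im,
        Complex.mul_im, Complex.I_re, Complex.I_im, Complex.natCast_re, Complex.natCast_im]
      field_simp
      ring
  rw [hsurj, finrank_top] at hrn
  have h1 : finrank ℝ ℝ = 1 := finrank_self ℝ
  rw [h1, finrank_sk] at hrn
  rw [su_eq_map, Submodule.finrank_map_subtype_eq]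
  omega

lemma mem_su {X : Mat m} : X ∈ su m ↔ Xᴴ = -X ∧ X.trace = 0 := Iff.rfl

lemma span_stab_eq (A : Mat m) :
    Submodule.span ℝ (stabSet17 A) = PP m ⊓ LinearMap.ker (phi A) := by
  have hset : stabSet17 A = ↑(PP m ⊓ LinearMap.ker (phi A)) := by
    ext p
    simp only [stabSet17, Set.mem_setOf_eq, SetLike.mem_coe, Submodule.mem_inf,
      LinearMap.mem_ker, PP, Submodule.mem_prod, mem_su]
    constructor
    · rintro ⟨h1, h2, h3, h4, h5⟩
      exact ⟨⟨⟨h1, h2⟩, ⟨h3, h4⟩⟩, by show p.1 * A - A * p.2 = 0; rw [h5]; exact sub_self _⟩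
    · rintro ⟨⟨⟨h1, h2⟩, ⟨h3, h4⟩⟩, h5⟩
      have h5' : p.1 * A - A * p.2 = 0 := h5
      exact ⟨h1, h2, h3, h4, sub_eq_zero.mp h5'⟩
  rw [hset, Submodule.span_eq]

lemma span_tang_eq (A : Mat m) :
    Submodule.span ℝ (tangSet17 A) = Submodule.map (phi A) (PP m) := by
  have hset : tangSet17 A = ↑(Submodule.map (phi A) (PP m)) := by
    ext B
    simp only [tangSet17, Set.mem_setOf_eq, SetLike.mem_coe, Submodule.mem_map, PP,
      Submodule.mem_prod, mem_su]
    constructor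
    · rintro ⟨X, Y, h1, h2, h3, h4, h5⟩
      exact ⟨(X, Y), ⟨⟨h1, h2⟩, ⟨h3, h4⟩⟩, h5.symm⟩
    · rintro ⟨⟨X, Y⟩, ⟨⟨h1, h2⟩, ⟨h3, h4⟩⟩, h5⟩
      exact ⟨X, Y, h1, h2, h3, h4, h5.symm⟩
  rw [hset, Submodule.span_eq]

lemma finrank_PP (hm : 1 ≤ m) : finrank ℝ (PP m) = 2 * (m * m) - 2 := by
  have e : (PP m) ≃ₗ[ℝ] (su m × su m) := {
    toFun := fun x => (⟨x.1.1, x.2.1⟩, ⟨x.1.2, x.2.2⟩)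
    invFun := fun y => ⟨(y.1.1, y.2.1), ⟨y.1.2, y.2.2⟩⟩
    map_add' := fun x y => rfl
    map_smul' := fun r x => rfl
    left_inv := fun x => rfl
    right_inv := fun y => rfl }
  have : finrank ℝ (PP m) = finrank ℝ (su m) + finrank ℝ (su m) := by
    rw [e.finrank_eq, Module.finrank_prod]
  rw [this, finrank_su m hm]
  omega

lemma rank_nullity (A : Mat m) (hm : 1 ≤ m) :
    finrank ℝ (Submodule.map (phi A) (PP m)) + finrank ℝ ↥(PP m ⊓ LinearMap.ker (phi A)) =
      2 * (m * m) - 2 := by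
  have hrn := LinearMap.finrank_range_add_finrank_ker ((phi A).domRestrict (PP m))
  rw [LinearMap.range_domRestrict] at hrn
  rw [LinearMap.ker_domRestrict] at hrn
  have h2 : finrank ℝ ↥(Submodule.comap (PP m).subtype (LinearMap.ker (phi A)))
      = finrank ℝ ↥(PP m ⊓ LinearMap.ker (phi A)) := by
    rw [← Submodule.finrank_map_subtype_eq (PP m)
      (Submodule.comap (PP m).subtype (LinearMap.ker (phi A))), Submodule.map_comap_subtype]
  rw [h2] at hrn
  rw [← finrank_PP hm]
  exact hrn

noncomputable def A0 (m : ℕ) : Mat m := diagonal (fun i => ((i : ℕ) + 1 : ℂ))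

/-- the sum functional on ℝ^m -/
noncomputable def sumLin (m : ℕ) : (Fin m → ℝ) →ₗ[ℝ] ℝ where
  toFun r := ∑ i, r i
  map_add' a b := by simp [Finset.sum_add_distrib]
  map_smul' r a := by simp [Finset.mul_sum]

lemma finrank_hyp (m : ℕ) (hm : 1 ≤ m) :
    finrank ℝ (LinearMap.ker (sumLin m)) = m - 1 := by
  have hrn := LinearMap.finrank_range_add_finrank_ker (sumLin m)
  have hsurj : LinearMap.range (sumLin m) = ⊤ := by
    rw [LinearMap.range_eq_top]
    intro r
    refine ⟨Pi.single ⟨0, hm⟩ r, ?_⟩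
    show ∑ i, Pi.single (⟨0, hm⟩ : Fin m) r i = r
    simp
  rw [hsurj, finrank_top, finrank_self] at hrn
  have : finrank ℝ (Fin m → ℝ) = m := by simp
  rw [this] at hrn
  omega

/-- the submodule E of pairs (X,X) with X diagonal purely imaginary traceless -/
noncomputable def EE (m : ℕ) : Submodule ℝ (Mat m × Mat m) where
  carrier := {p | p.2 = p.1 ∧ (∀ i j, i ≠ j → p.1 i j = 0) ∧ (∀ i, (p.1 i i).re = 0) ∧
    p.1.trace = 0}
  add_mem' := by
    rintro a b ⟨ha1, ha2, ha3, ha4⟩ ⟨hb1, hb2, hb3, hb4⟩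
    refine ⟨by rw [Prod.snd_add, ha1, hb1, Prod.fst_add], fun i j hij => ?_, fun i => ?_, ?_⟩
    · show a.1 i j + b.1 i j = 0
      rw [ha2 i j hij, hb2 i j hij, add_zero]
    · show (a.1 i i + b.1 i i).re = 0
      rw [Complex.add_re, ha3 i, hb3 i, add_zero]
    · show (a.1 + b.1).trace = 0
      rw [trace_add, ha4, hb4, add_zero]
  zero_mem' := by
    refine ⟨rfl, fun i j _ => rfl, fun i => ?_, ?_⟩ <;> simp
  smul_mem' := by
    rintro r a ⟨ha1, ha2, ha3, ha4⟩
    refine ⟨by rw [Prod.smul_snd, ha1, Prod.smul_fst], fun i j hij => ?_, fun i => ?_, ?_⟩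
    · show r • a.1 i j = 0
      rw [ha2 i j hij, smul_zero]
    · show (r • a.1 i i).re = 0
      rw [Complex.smul_re, ha3 i, smul_zero]
    · show (r • a.1).trace = 0
      rw [trace_smul, ha4, smul_zero]

lemma stab_sub_EE : stabSet17 (A0 m) ⊆ ↑(EE m) := by
  rintro ⟨X, Y⟩ ⟨h1, h2, h3, h4, h5⟩
  have d : Fin m → ℂ := fun i => ((i : ℕ) + 1 : ℂ)
  have hdne : ∀ i : Fin m, ((i : ℕ) + 1 : ℂ) ≠ 0 := by
    intro i
    exact Nat.cast_add_one_ne_zero (i : ℕ)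
  have key : ∀ i j, X i j * ((j : ℕ) + 1 : ℂ) = ((i : ℕ) + 1 : ℂ) * Y i j := by
    intro i j
    have := congrFun (congrFun h5 i) j
    simp only [A0, mul_diagonal, diagonal_mul] at this
    exact this
  -- skewness entrywise
  have hXs : ∀ i j, (starRingEnd ℂ) (X j i) = -X i j := by
    intro i j
    have := congrFun (congrFun h1 i) j
    exact this
  have hYs : ∀ i j, (starRingEnd ℂ) (Y j i) = -Y i j := by
    intro i j
    have := congrFun (congrFun h3 i) j
    exact this
  have key2 : ∀ i j, X i j * ((i : ℕ) + 1 : ℂ) = ((j : ℕ) + 1 : ℂ) * Y i j := by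
    intro i j
    have h := key j i
    have h' := congrArg (starRingEnd ℂ) h
    rw [_root_.map_mul, _root_.map_mul] at h'
    rw [hXs i j] at h'
    have hconjd : ∀ k : Fin m, (starRingEnd ℂ) ((k : ℕ) + 1 : ℂ) = ((k : ℕ) + 1 : ℂ) := by
      intro k
      simp [Complex.conj_natCast]
    rw [hconjd i, hconjd j] at h'
    rw [hYs i j] at h'
    -- h' : -X i j * (i+1) = (j+1) * (-Y i j)
    have := h'
    linear_combination -this
  -- off-diagonal vanishing
  have hoffY : ∀ i j, i ≠ j → Y i j = 0 := by
    intro i j hij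
    have e1 := key i j
    have e2 := key2 i j
    -- multiply e1 by (i+1), e2 by (j+1)
    have e3 : ((i:ℕ)+1:ℂ) * ((i:ℕ)+1:ℂ) * Y i j = ((j:ℕ)+1:ℂ) * ((j:ℕ)+1:ℂ) * Y i j := by
      linear_combination ((j:ℕ)+1:ℂ) * e2 - ((i:ℕ)+1:ℂ) * e1
    have hne : ((i:ℕ)+1:ℂ) * ((i:ℕ)+1:ℂ) - ((j:ℕ)+1:ℂ) * ((j:ℕ)+1:ℂ) ≠ 0 := by
      intro hcon
      have : (((i:ℕ)+1) * ((i:ℕ)+1) : ℂ) = (((j:ℕ)+1) * ((j:ℕ)+1) : ℂ) := by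
        linear_combination hcon
      have : ((i:ℕ)+1) * ((i:ℕ)+1) = ((j:ℕ)+1) * ((j:ℕ)+1) := by exact_mod_cast this
      have : (i:ℕ) = (j:ℕ) := by nlinarith
      exact hij (Fin.ext this)
    have : (((i:ℕ)+1:ℂ) * ((i:ℕ)+1:ℂ) - ((j:ℕ)+1:ℂ) * ((j:ℕ)+1:ℂ)) * Y i j = 0 := by
      linear_combination e3
    rcases mul_eq_zero.mp this with h | h
    · exact absurd h hne
    · exact h
  have hoffX : ∀ i j, i ≠ j → X i j = 0 := by
    intro i j hij
    have e1 := key i j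
    rw [hoffY i j hij, mul_zero] at e1
    exact (mul_eq_zero.mp e1).resolve_right (hdne j)
  -- diagonal equality
  have hdiag : ∀ i, X i i = Y i i := by
    intro i
    have e1 := key i i
    have e2 : ((i:ℕ)+1:ℂ) * X i i = ((i:ℕ)+1:ℂ) * Y i i := by linear_combination e1
    exact mul_left_cancel₀ (hdne i) e2
  refine ⟨?_, hoffX, fun i => ?_, h2⟩
  · funext i j
    by_cases hij : i = j
    · subst hij; exact (hdiag i).symm
    · show Y i j = X i j
      rw [hoffX i j hij, hoffY i j hij]
  · have := hXs i i
    have hre := congrArg Complex.re this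
    simp only [Complex.conj_re, Complex.neg_re] at hre
    linarith

noncomputable def diagIm (m : ℕ) : (Mat m × Mat m) →ₗ[ℝ] (Fin m → ℝ) where
  toFun p := fun i => (p.1 i i).im
  map_add' a b := by
    funext i
    show (a.1 i i + b.1 i i).im = _
    simp [Complex.add_im]
  map_smul' r a := by
    funext i
    show (r • a.1 i i).im = _
    simp [Complex.smul_im]

lemma finrank_EE (hm : 1 ≤ m) : finrank ℝ (EE m) ≤ m - 1 := by
  have hinj : Function.Injective ((diagIm m).domRestrict (EE m)) := by
    rw [← LinearMap.ker_eq_bot, LinearMap.ker_domRestrict]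
    rw [Submodule.eq_bot_iff]
    rintro ⟨⟨X, Y⟩, hmem⟩ hker
    obtain ⟨h1, h2, h3, h4⟩ := hmem
    simp only [Submodule.mem_comap, LinearMap.mem_ker, Submodule.coe_subtype] at hker
    have him : ∀ i, (X i i).im = 0 := fun i => congrFun hker i
    have hX : X = 0 := by
      funext i j
      by_cases hij : i = j
      · subst hij
        exact Complex.ext (h3 i) (him i)
      · exact h2 i j hij
    have hY : Y = 0 := by rw [show Y = X from h1, hX]
    have : ((X, Y) : Mat m × Mat m) = 0 := by rw [hX, hY]; rfl
    exact Subtype.ext this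
  have hrange : LinearMap.range ((diagIm m).domRestrict (EE m)) ≤ LinearMap.ker (sumLin m) := by
    rintro r ⟨⟨⟨X, Y⟩, hmem⟩, rfl⟩
    obtain ⟨h1, h2, h3, h4⟩ := hmem
    show ∑ i, (X i i).im = 0
    have : (X.trace).im = 0 := by rw [h4]; simp
    rw [trace] at this
    rw [← this]
    rw [Complex.im_sum]
    rfl
  calc finrank ℝ (EE m) = finrank ℝ (LinearMap.range ((diagIm m).domRestrict (EE m))) :=
        (LinearMap.finrank_range_of_inj hinj).symm
    _ ≤ finrank ℝ (LinearMap.ker (sumLin m)) := Submodule.finrank_mono hrange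
    _ = m - 1 := finrank_hyp m hm

-- diagonal skew matrix from a real vector
noncomputable def Dg {m : ℕ} (v : Fin m → ℝ) : Mat m :=
  diagonal (fun j => (v j : ℂ) * Complex.I)

lemma Dg_add (v w : Fin m → ℝ) : Dg (v + w) = Dg v + Dg w := by
  unfold Dg
  ext i j
  by_cases h : i = j
  · subst h
    simp only [diagonal_apply_eq, Matrix.add_apply, Pi.add_apply]
    push_cast
    ring
  · simp [diagonal_apply_ne _ h]

lemma Dg_smul (r : ℝ) (v : Fin m → ℝ) : Dg (r • v) = r • Dg v := by
  unfold Dg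
  ext i j
  by_cases h : i = j
  · subst h
    simp only [diagonal_apply_eq, Matrix.smul_apply, Pi.smul_apply, smul_eq_mul,
      Complex.real_smul]
    push_cast
    ring
  · simp [diagonal_apply_ne _ h]

lemma Dg_conjTranspose (v : Fin m → ℝ) : (Dg v)ᴴ = -Dg v := by
  unfold Dg
  ext i j
  by_cases h : i = j
  · subst h
    simp only [conjTranspose_apply, diagonal_apply_eq, Matrix.neg_apply, Complex.star_def]
    rw [map_mul (starRingEnd ℂ), Complex.conj_I, Complex.conj_ofReal]
    ring
  · simp [diagonal_apply_ne _ h, diagonal_apply_ne _ (Ne.symm h), conjTranspose_apply]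

lemma stab_lower (A : Mat m) (hm : 1 ≤ m) :
    m - 1 ≤ finrank ℝ (Submodule.span ℝ (stabSet17 A)) := by
  classical
  -- spectral data for H = A Aᴴ
  have hH : (A * Aᴴ).IsHermitian := isHermitian_mul_conjTranspose_self A
  have hH2 : (Aᴴ * A).IsHermitian := isHermitian_conjTranspose_mul_self A
  set U : Mat m := ↑(hH.eigenvectorUnitary) with hU_def
  set eig : Fin m → ℝ := hH.eigenvalues with heig_def
  set V : Mat m := ↑(hH2.eigenvectorUnitary) with hV_def
  set eig' : Fin m → ℝ := hH2.eigenvalues with heig'_def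
  have hUU : Uᴴ * U = 1 := by
    rw [← star_eq_conjTranspose]
    exact (Unitary.mem_iff.mp hH.eigenvectorUnitary.2).1
  have hUU' : U * Uᴴ = 1 := by
    rw [← star_eq_conjTranspose]
    exact (Unitary.mem_iff.mp hH.eigenvectorUnitary.2).2
  have hVV : Vᴴ * V = 1 := by
    rw [← star_eq_conjTranspose]
    exact (Unitary.mem_iff.mp hH2.eigenvectorUnitary.2).1
  have hVV' : V * Vᴴ = 1 := by
    rw [← star_eq_conjTranspose]
    exact (Unitary.mem_iff.mp hH2.eigenvectorUnitary.2).2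
  have spec : A * Aᴴ = U * diagonal (fun j => (eig j : ℂ)) * Uᴴ := by
    have := hH.spectral_theorem
    rw [← star_eq_conjTranspose]
    convert this using 2
    · rfl
    · rw [Unitary.conjStarAlgAut_apply]; rfl
  have spec2 : Aᴴ * A = V * diagonal (fun j => (eig' j : ℂ)) * Vᴴ := by
    have := hH2.spectral_theorem
    rw [← star_eq_conjTranspose]
    convert this using 2
    · rfl
    · rw [Unitary.conjStarAlgAut_apply]; rfl
  set B : Mat m := Uᴴ * A with hB_def
  set C : Mat m := A * V with hC_def
  have keyB : B * Bᴴ = diagonal (fun j => (eig j : ℂ)) := by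
    have : B * Bᴴ = Uᴴ * (A * Aᴴ) * U := by
      rw [hB_def, conjTranspose_mul, conjTranspose_conjTranspose]
      noncomm_ring
    rw [this, spec]
    calc Uᴴ * (U * diagonal (fun j => (eig j : ℂ)) * Uᴴ) * U
        = (Uᴴ * U) * diagonal (fun j => (eig j : ℂ)) * (Uᴴ * U) := by noncomm_ring
      _ = diagonal (fun j => (eig j : ℂ)) := by rw [hUU, one_mul, mul_one]
  have keyC : Cᴴ * C = diagonal (fun j => (eig' j : ℂ)) := by
    have : Cᴴ * C = Vᴴ * (Aᴴ * A) * V := by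
      rw [hC_def, conjTranspose_mul]
      noncomm_ring
    rw [this, spec2]
    calc Vᴴ * (V * diagonal (fun j => (eig' j : ℂ)) * Vᴴ) * V
        = (Vᴴ * V) * diagonal (fun j => (eig' j : ℂ)) * (Vᴴ * V) := by noncomm_ring
      _ = diagonal (fun j => (eig' j : ℂ)) := by rw [hVV, one_mul, mul_one]
  have rowzero : ∀ j, eig j = 0 → ∀ k, B j k = 0 := by
    intro j hj k
    have hdiag := congrFun (congrFun keyB j) j
    rw [diagonal_apply_eq, hj, Complex.ofReal_zero] at hdiag
    have h1 : ∑ l, B j l * star (B j l) = 0 := by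
      rw [← hdiag]
      simp [Matrix.mul_apply, conjTranspose_apply]
    have h2 : ∑ l, (Complex.normSq (B j l) : ℂ) = 0 := by
      rw [← h1]
      apply Finset.sum_congr rfl
      intro l _
      rw [Complex.star_def, Complex.mul_conj]
    have hsum : ∑ l, Complex.normSq (B j l) = 0 := by exact_mod_cast h2
    have hterm := (Finset.sum_eq_zero_iff_of_nonneg
      (fun l _ => Complex.normSq_nonneg (B j l))).mp hsum k (Finset.mem_univ k)
    exact Complex.normSq_eq_zero.mp hterm
  have colzero : ∀ j, eig' j = 0 → ∀ k, C k j = 0 := by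
    intro j hj k
    have hdiag := congrFun (congrFun keyC j) j
    rw [diagonal_apply_eq, hj, Complex.ofReal_zero] at hdiag
    have h1 : ∑ l, star (C l j) * C l j = 0 := by
      rw [← hdiag]
      simp [Matrix.mul_apply, conjTranspose_apply]
    have h2 : ∑ l, (Complex.normSq (C l j) : ℂ) = 0 := by
      rw [← h1]
      apply Finset.sum_congr rfl
      intro l _
      rw [mul_comm, Complex.star_def, Complex.mul_conj]
    have hsum : ∑ l, Complex.normSq (C l j) = 0 := by exact_mod_cast h2
    have hterm := (Finset.sum_eq_zero_iff_of_nonneg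
      (fun l _ => Complex.normSq_nonneg (C l j))).mp hsum k (Finset.mem_univ k)
    exact Complex.normSq_eq_zero.mp hterm
  -- determinant equality
  have detEq : ∏ j, eig j = ∏ j, eig' j := by
    have hd1 : det (A * Aᴴ) = ∏ j, ((eig j : ℂ)) := by
      calc det (A * Aᴴ) = det (U * diagonal (fun j => (eig j : ℂ)) * Uᴴ) := by rw [spec]
        _ = det U * det (diagonal (fun j => (eig j : ℂ))) * det Uᴴ := by
            rw [det_mul, det_mul]
        _ = det (diagonal (fun j => (eig j : ℂ))) * (det U * det Uᴴ) := by ring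
        _ = det (diagonal (fun j => (eig j : ℂ))) * det (U * Uᴴ) := by rw [det_mul]
        _ = ∏ j, ((eig j : ℂ)) := by rw [hUU', det_one, mul_one, det_diagonal]
    have hd2 : det (Aᴴ * A) = ∏ j, ((eig' j : ℂ)) := by
      calc det (Aᴴ * A) = det (V * diagonal (fun j => (eig' j : ℂ)) * Vᴴ) := by rw [spec2]
        _ = det V * det (diagonal (fun j => (eig' j : ℂ))) * det Vᴴ := by
            rw [det_mul, det_mul]
        _ = det (diagonal (fun j => (eig' j : ℂ))) * (det V * det Vᴴ) := by ring
        _ = det (diagonal (fun j => (eig' j : ℂ))) * det (V * Vᴴ) := by rw [det_mul]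
        _ = ∏ j, ((eig' j : ℂ)) := by rw [hVV', det_one, mul_one, det_diagonal]
    have hdd : det (A * Aᴴ) = det (Aᴴ * A) := by rw [det_mul, det_mul]; ring
    have : (∏ j, ((eig j : ℂ))) = ∏ j, ((eig' j : ℂ)) := by rw [← hd1, hdd, hd2]
    exact_mod_cast this
  -- auxiliary data
  set dq : Fin m → ℂ := fun j => if eig' j = 0 then 1 else 0 with hdq_def
  set Q : Mat m := V * diagonal dq * Vᴴ with hQ_def
  set k0 : ℝ := ∑ j, (if eig' j = 0 then (1:ℝ) else 0) with hk0_def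
  set gam : ℝ := if k0 = 0 then 0 else k0⁻¹ with hgam_def
  set wv : (Fin m → ℝ) → (Fin m → ℝ) :=
    fun c j => c j * (if eig j = 0 then 0 else (eig j)⁻¹) with hwv_def
  set sv : (Fin m → ℝ) → ℝ := fun c => ∑ j, (if eig j = 0 then 0 else c j) with hsv_def
  set bv : (Fin m → ℝ) → ℝ := fun c => -(sv c) * gam with hbv_def
  have hsand : ∀ D1 D2 : Mat m, (U * D1 * Uᴴ) * (U * D2 * Uᴴ) = U * (D1 * D2) * Uᴴ := by
    intro D1 D2
    rw [show (U * D1 * Uᴴ) * (U * D2 * Uᴴ) = U * D1 * ((Uᴴ * U) * (D2 * Uᴴ)) by noncomm_ring,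
      hUU, one_mul]
    noncomm_ring
  have htraceSand : ∀ D : Mat m, trace (U * D * Uᴴ) = trace D := by
    intro D
    rw [trace_mul_cycle, show Uᴴ * U * D = D by rw [hUU, one_mul]]
  -- the linear map
  set L : (Fin m → ℝ) →ₗ[ℝ] (Mat m × Mat m) := {
    toFun := fun c => (U * Dg c * Uᴴ,
      Aᴴ * (U * Dg (wv c) * Uᴴ) * A + (bv c) • (Complex.I • Q))
    map_add' := by
      intro c c'
      have hw : wv (c + c') = wv c + wv c' := by
        funext j
        simp only [hwv_def, Pi.add_apply]
        ring
      have hs : sv (c + c') = sv c + sv c' := by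
        simp only [hsv_def, Pi.add_apply, ← Finset.sum_add_distrib]
        apply Finset.sum_congr rfl
        intro j _
        split <;> ring
      have hb : bv (c + c') = bv c + bv c' := by
        simp only [hbv_def, hs]
        ring
      ext : 1
      · show U * Dg (c + c') * Uᴴ = U * Dg c * Uᴴ + U * Dg c' * Uᴴ
        rw [Dg_add]
        noncomm_ring
      · show Aᴴ * (U * Dg (wv (c + c')) * Uᴴ) * A + (bv (c + c')) • (Complex.I • Q) = _
        rw [hw, hb, Dg_add, add_smul]
        have : Aᴴ * (U * (Dg (wv c) + Dg (wv c')) * Uᴴ) * A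
            = Aᴴ * (U * Dg (wv c) * Uᴴ) * A + Aᴴ * (U * Dg (wv c') * Uᴴ) * A := by
          noncomm_ring
        rw [this, add_add_add_comm]
        rfl
    map_smul' := by
      intro r c
      have hw : wv (r • c) = r • wv c := by
        funext j
        simp only [hwv_def, Pi.smul_apply, smul_eq_mul]
        ring
      have hs : sv (r • c) = r * sv c := by
        simp only [hsv_def, Pi.smul_apply, smul_eq_mul, Finset.mul_sum]
        apply Finset.sum_congr rfl
        intro j _
        split <;> ring
      have hb : bv (r • c) = r * bv c := by
        simp only [hbv_def, hs]
        ring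
      simp only [RingHom.id_apply]
      ext : 1
      · show U * Dg (r • c) * Uᴴ = r • (U * Dg c * Uᴴ, _).1
        rw [Dg_smul]
        simp only [Matrix.smul_mul, Matrix.mul_smul]
      · show Aᴴ * (U * Dg (wv (r • c)) * Uᴴ) * A + (bv (r • c)) • (Complex.I • Q) = _
        rw [hw, hb, Dg_smul]
        show _ = r • (Aᴴ * (U * Dg (wv c) * Uᴴ) * A + (bv c) • (Complex.I • Q))
        rw [smul_add]
        congr 1
        · simp only [Matrix.smul_mul, Matrix.mul_smul]
        · rw [← smul_smul] } with hL_def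
  -- membership
  have hLmem : ∀ c, c ∈ LinearMap.ker (sumLin m) → L c ∈ stabSet17 A := by
    intro c hc
    have hc0 : ∑ j, c j = 0 := hc
    constructor
    · -- X skew
      show (U * Dg c * Uᴴ)ᴴ = -(U * Dg c * Uᴴ)
      simp only [conjTranspose_mul, conjTranspose_conjTranspose, Dg_conjTranspose]
      noncomm_ring
    refine ⟨?_, ?_, ?_, ?_⟩
    · -- X trace
      show trace (U * Dg c * Uᴴ) = 0
      rw [htraceSand]
      unfold Dg
      rw [trace_diagonal, ← Finset.sum_mul]
      have : (∑ j, ((c j : ℂ))) = 0 := by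
        rw [← Complex.ofReal_sum, hc0, Complex.ofReal_zero]
      rw [this, zero_mul]
    · -- Y skew
      show (Aᴴ * (U * Dg (wv c) * Uᴴ) * A + (bv c) • (Complex.I • Q))ᴴ
        = -(Aᴴ * (U * Dg (wv c) * Uᴴ) * A + (bv c) • (Complex.I • Q))
      have hQh : Qᴴ = Q := by
        rw [hQ_def]
        simp only [conjTranspose_mul, conjTranspose_conjTranspose, diagonal_conjTranspose]
        have : star dq = dq := by
          funext j
          simp only [hdq_def, Pi.star_apply]
          split <;> simp
        rw [this]
        noncomm_ring
      rw [conjTranspose_add]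
      have h1 : (Aᴴ * (U * Dg (wv c) * Uᴴ) * A)ᴴ = -(Aᴴ * (U * Dg (wv c) * Uᴴ) * A) := by
        simp only [conjTranspose_mul, conjTranspose_conjTranspose, Dg_conjTranspose]
        noncomm_ring
      have h2 : ((bv c) • (Complex.I • Q))ᴴ = -((bv c) • (Complex.I • Q)) := by
        rw [conjTranspose_smul, conjTranspose_smul, hQh]
        simp only [Complex.star_def, Complex.conj_I, star_trivial]
        rw [neg_smul, smul_neg]
      rw [h1, h2, neg_add]
    · -- Y trace
      show trace (Aᴴ * (U * Dg (wv c) * Uᴴ) * A + (bv c) • (Complex.I • Q)) = 0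
      rw [trace_add, trace_smul, trace_smul]
      have ht1 : trace (Aᴴ * (U * Dg (wv c) * Uᴴ) * A) = (sv c : ℂ) * Complex.I := by
        rw [trace_mul_cycle]
        rw [show A * Aᴴ * (U * Dg (wv c) * Uᴴ)
            = (U * diagonal (fun j => (eig j : ℂ)) * Uᴴ) * (U * Dg (wv c) * Uᴴ) by rw [← spec]]
        rw [hsand, htraceSand]
        unfold Dg
        rw [diagonal_mul_diagonal, trace_diagonal]
        have : ∀ j, (eig j : ℂ) * (((wv c j : ℝ) : ℂ) * Complex.I)
            = ((if eig j = 0 then (0:ℝ) else c j) : ℂ) * Complex.I := by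
          intro j
          by_cases h : eig j = 0
          · simp [hwv_def, h]
          · simp only [hwv_def, if_neg h]
            push_cast
            rw [show (eig j : ℂ) * ((c j : ℂ) * ((eig j : ℂ))⁻¹ * Complex.I)
              = (c j : ℂ) * Complex.I * ((eig j : ℂ) * ((eig j : ℂ))⁻¹) from by ring]
            rw [mul_inv_cancel₀ (by exact_mod_cast h), mul_one]
        rw [Finset.sum_congr rfl (fun j _ => this j), ← Finset.sum_mul]
        congr 1
        rw [hsv_def]
        push_cast [apply_ite (fun (x:ℝ) => (x:ℂ))]
        rfl
      have ht2 : trace Q = (k0 : ℂ) := by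
        rw [hQ_def]
        have : trace (V * diagonal dq * Vᴴ) = trace (diagonal dq) := by
          rw [trace_mul_cycle, show Vᴴ * V * diagonal dq = diagonal dq by rw [hVV, one_mul]]
        rw [this, trace_diagonal, hk0_def, Complex.ofReal_sum]
        apply Finset.sum_congr rfl
        intro j _
        by_cases h : eig' j = 0 <;> simp [hdq_def, h]
      rw [ht1, ht2]
      have hfinal : (sv c : ℂ) * Complex.I + (bv c) • (Complex.I • (k0:ℂ)) = 0 := by
        by_cases hk : k0 = 0
        · -- all eig' nonzero, hence all eig nonzero, hence sv c = 0
          have hall' : ∀ j, eig' j ≠ 0 := by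
            intro j hj
            have hzero := (Finset.sum_eq_zero_iff_of_nonneg
              (fun j _ => by positivity)).mp (hk0_def ▸ hk) j (Finset.mem_univ j)
            rw [if_pos hj] at hzero
            norm_num at hzero
          have hprod : (∏ j, eig j) ≠ 0 := by
            rw [detEq]
            exact Finset.prod_ne_zero_iff.mpr (fun j _ => hall' j)
          have hall : ∀ j, eig j ≠ 0 := by
            intro j
            exact Finset.prod_ne_zero_iff.mp hprod j (Finset.mem_univ j)
          have hsv : sv c = 0 := by
            rw [hsv_def]
            simp only [hsv_def]
            rw [show (∑ j, if eig j = 0 then (0:ℝ) else c j) = ∑ j, c j from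
              Finset.sum_congr rfl (fun j _ => if_neg (hall j)), hc0]
          rw [hsv, hk]
          simp
        · have hbv' : bv c = -(sv c) * k0⁻¹ := by rw [hbv_def, hgam_def, if_neg hk]
          rw [hbv']
          have hk' : (k0 : ℂ) ≠ 0 := by exact_mod_cast hk
          simp only [Complex.real_smul, smul_eq_mul]
          push_cast
          field_simp
          ring
      exact hfinal
    · -- intertwining
      show (U * Dg c * Uᴴ) * A = A * (Aᴴ * (U * Dg (wv c) * Uᴴ) * A + (bv c) • (Complex.I • Q))
      have hAQ : A * Q = 0 := by
        rw [hQ_def, show A * (V * diagonal dq * Vᴴ) = (A * V) * diagonal dq * Vᴴ by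
          noncomm_ring]
        have : (A * V) * diagonal dq = 0 := by
          ext i j
          rw [mul_diagonal]
          simp only [Matrix.zero_apply]
          by_cases h : eig' j = 0
          · rw [show (A * V) i j = 0 from colzero j h i]
            ring
          · simp [hdq_def, if_neg h]
        rw [this, Matrix.zero_mul]
      have hmain : Dg c * B = (diagonal (fun j => (eig j : ℂ)) * Dg (wv c)) * B := by
        have hdd : diagonal (fun j => (eig j : ℂ)) * Dg (wv c)
            = diagonal (fun i => (eig i : ℂ) * (((wv c i : ℝ):ℂ) * Complex.I)) := by
          unfold Dg; rw [diagonal_mul_diagonal]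
        rw [hdd]
        unfold Dg
        ext i j
        rw [diagonal_mul, diagonal_mul]
        by_cases h : eig i = 0
        · rw [rowzero i h j]
          ring
        · have heq : (eig i : ℂ) * (((wv c i : ℝ):ℂ) * Complex.I) = (c i : ℂ) * Complex.I := by
            simp only [hwv_def, if_neg h]
            push_cast
            rw [show (eig i : ℂ) * ((c i : ℂ) * ((eig i : ℂ))⁻¹ * Complex.I)
              = (c i : ℂ) * Complex.I * ((eig i : ℂ) * ((eig i : ℂ))⁻¹) from by ring]
            rw [mul_inv_cancel₀ (by exact_mod_cast h), mul_one]
          rw [heq]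
      calc (U * Dg c * Uᴴ) * A = U * (Dg c * B) := by rw [hB_def]; noncomm_ring
        _ = U * ((diagonal (fun j => (eig j : ℂ)) * Dg (wv c)) * B) := by rw [hmain]
        _ = (U * (diagonal (fun j => (eig j : ℂ)) * Dg (wv c)) * Uᴴ) * A := by
            rw [hB_def]; noncomm_ring
        _ = ((U * diagonal (fun j => (eig j : ℂ)) * Uᴴ) * (U * Dg (wv c) * Uᴴ)) * A := by
            rw [hsand]
        _ = (A * Aᴴ) * (U * Dg (wv c) * Uᴴ) * A := by rw [← spec]
        _ = A * (Aᴴ * (U * Dg (wv c) * Uᴴ) * A) := by noncomm_ring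
        _ = A * (Aᴴ * (U * Dg (wv c) * Uᴴ) * A + (bv c) • (Complex.I • Q)) := by
            rw [Matrix.mul_add, Matrix.mul_smul, Matrix.mul_smul, hAQ]
            simp
  -- injectivity
  have hinj : Function.Injective L := by
    rw [← LinearMap.ker_eq_bot, Submodule.eq_bot_iff]
    intro c hcker
    have h0 : U * Dg c * Uᴴ = 0 := congrArg Prod.fst hcker
    have hDg : Dg c = 0 := by
      have : Uᴴ * (U * Dg c * Uᴴ) * U = Dg c := by
        rw [show Uᴴ * (U * Dg c * Uᴴ) * U = (Uᴴ * U) * Dg c * (Uᴴ * U) by noncomm_ring,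
          hUU, one_mul, mul_one]
      rw [← this, h0, Matrix.mul_zero, Matrix.zero_mul]
    funext j
    have := congrFun (congrFun hDg j) j
    rw [show Dg c j j = (c j : ℂ) * Complex.I from diagonal_apply_eq _ j] at this
    have := mul_eq_zero.mp this
    rcases this with h | h
    · exact_mod_cast h
    · exact absurd h Complex.I_ne_zero
  -- conclusion
  have hmaple : Submodule.map L (LinearMap.ker (sumLin m)) ≤ Submodule.span ℝ (stabSet17 A) := by
    rintro x ⟨c, hc, rfl⟩
    exact Submodule.subset_span (hLmem c hc)
  calc m - 1 = finrank ℝ (LinearMap.ker (sumLin m)) := (finrank_hyp m hm).symm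
    _ = finrank ℝ (Submodule.map L (LinearMap.ker (sumLin m))) :=
        (Submodule.equivMapOfInjective L hinj _).finrank_eq
    _ ≤ finrank ℝ (Submodule.span ℝ (stabSet17 A)) := Submodule.finrank_mono hmaple

lemma stab_upper (hm : 1 ≤ m) :
    finrank ℝ (Submodule.span ℝ (stabSet17 (A0 m))) ≤ m - 1 := by
  have h1 : Submodule.span ℝ (stabSet17 (A0 m)) ≤ EE m := Submodule.span_le.mpr stab_sub_EE
  calc finrank ℝ (Submodule.span ℝ (stabSet17 (A0 m))) ≤ finrank ℝ (EE m) :=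
        Submodule.finrank_mono h1
    _ ≤ m - 1 := finrank_EE hm

theorem stmt17 (m : ℕ) (hm : 2 ≤ m) :
    IsLeast {d : ℕ | ∃ A : Matrix (Fin m) (Fin m) ℂ,
        d = Module.finrank ℝ (Submodule.span ℝ (stabSet17 A))}
      (m - 1) ∧
    IsGreatest {d : ℕ | ∃ A : Matrix (Fin m) (Fin m) ℂ,
        d = Module.finrank ℝ (Submodule.span ℝ (tangSet17 A))}
      (2 * m ^ 2 - (m + 1)) := by
  have hm1 : 1 ≤ m := by omega
  have hstabA0 : Module.finrank ℝ (Submodule.span ℝ (stabSet17 (A0 m))) = m - 1 :=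
    le_antisymm (stab_upper hm1) (stab_lower _ hm1)
  have key : ∀ A : Matrix (Fin m) (Fin m) ℂ,
      Module.finrank ℝ (Submodule.span ℝ (tangSet17 A)) +
        Module.finrank ℝ (Submodule.span ℝ (stabSet17 A)) = 2 * (m * m) - 2 := by
    intro A
    rw [span_stab_eq, span_tang_eq]
    exact rank_nullity A hm1
  constructor
  · constructor
    · exact ⟨A0 m, hstabA0.symm⟩
    · rintro d ⟨A, rfl⟩
      exact stab_lower A hm1
  · constructor
    · refine ⟨A0 m, ?_⟩
      have hk := key (A0 m)
      rw [hstabA0] at hk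
      have hmm : 2 ≤ m * m := by nlinarith
      have hval : Module.finrank ℝ (Submodule.span ℝ (tangSet17 (A0 m)))
          = 2 * (m*m) - 2 - (m-1) := by omega
      rw [hval]
      have hsq : m ^ 2 = m * m := sq m
      omega
    · rintro d ⟨A, rfl⟩
      have hk := key A
      have h2 := stab_lower A hm1
      have hsq : m ^ 2 = m * m := sq m
      omega
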